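/- Let H be an undirected graph on n nodes and construct the directed acyclic graph G on n+1 nodes by orienting the edges of H according to a fixed linear order on its vertices and adding a new source node s with an edge from s to every vertex of H. Then β(G) = max(α(H), 1), where α(H) is the independence number of H. In particular β(G) ≥ α(H) and α(H) ≥ β(v) for every vertex v of H. -/

import Mathlib

/-- The independence number `α(H)` of an undirected graph. -/
def alphaH {V : Type*} [Fintype V] [DecidableEq V] (H : SimpleGraph V)
    [DecidableRel H.Adj] : ℕ :=
  (Finset.univ.powerset.filter fun A : Finset V =>
    ∀ x ∈ A, ∀ y ∈ A, x ≠ y → ¬H.Adj x y).sup Finset.card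

/-- `β(u)`: the maximum size of a subset of `{u} ∪ δ⁺(u)` independent in the
underlying undirected graph. -/
def betaAt {W : Type*} [Fintype W] [DecidableEq W] (E : W → W → Prop) [DecidableRel E]
    (u : W) : ℕ :=
  ((insert u (Finset.univ.filter fun v => E u v)).powerset.filter fun A : Finset W =>
    ∀ x ∈ A, ∀ y ∈ A, x ≠ y → ¬E x y ∧ ¬E y x).sup Finset.card

/-- `β(G)`. -/
def betaG {W : Type*} [Fintype W] [DecidableEq W] (E : W → W → Prop) [DecidableRel E] : ℕ :=
  Finset.univ.sup fun u => betaAt E u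

lemma aux_card_le_alpha {V : Type*} [Fintype V] [DecidableEq V] [LinearOrder V]
    (H : SimpleGraph V) [DecidableRel H.Adj]
    (E : Option V → Option V → Prop) [DecidableRel E]
    (hEH : ∀ u v : V, E (some u) (some v) ↔ H.Adj u v ∧ u < v)
    (A : Finset (Option V)) (hnone : none ∉ A)
    (hind : ∀ x ∈ A, ∀ y ∈ A, x ≠ y → ¬E x y ∧ ¬E y x) :
    A.card ≤ alphaH H := by
  classical
  set B : Finset V := A.filterMap id (by
    intro a a' b hb hb'
    cases a <;> cases a' <;> simp_all [Option.mem_def]) with hB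
  have hmemB : ∀ x : V, x ∈ B ↔ some x ∈ A := by
    intro x
    simp [hB, Finset.mem_filterMap, Option.mem_def]
  have hAB : A = B.image some := by
    ext a
    cases a with
    | none => simp [hnone]
    | some v => simp [hmemB]
  have hcard : A.card = B.card := by
    rw [hAB, Finset.card_image_of_injective _ (Option.some_injective V)]
  have hBind : ∀ x ∈ B, ∀ y ∈ B, x ≠ y → ¬H.Adj x y := by
    intro x hx y hy hxy hadj
    have h1 := hind (some x) ((hmemB x).1 hx) (some y) ((hmemB y).1 hy)
      (by simpa using hxy)
    rcases lt_or_gt_of_ne hxy with h | h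
    · exact h1.1 ((hEH x y).2 ⟨hadj, h⟩)
    · exact h1.2 ((hEH y x).2 ⟨hadj.symm, h⟩)
  have hBmem : B ∈ (Finset.univ.powerset.filter fun A : Finset V =>
      ∀ x ∈ A, ∀ y ∈ A, x ≠ y → ¬H.Adj x y) := by
    simp only [Finset.mem_filter, Finset.mem_powerset]
    exact ⟨Finset.subset_univ _, hBind⟩
  calc A.card = B.card := hcard
    _ ≤ _ := Finset.le_sup hBmem

/-- Let `G` be the DAG obtained from an undirected graph `H` by orienting edges along a
linear order and adding a source `s = none` with an arc to every vertex.  Then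
`β(G) = max (α(H)) 1`; in particular `α(H) ≤ β(G)` and `β(v) ≤ α(H)` for every
vertex `v` of `H`. -/
theorem stmt_9 {V : Type*} [Fintype V] [DecidableEq V] [LinearOrder V] [Nonempty V]
    (H : SimpleGraph V) [DecidableRel H.Adj]
    (E : Option V → Option V → Prop) [DecidableRel E]
    (hEsrc : ∀ v : V, E none (some v))
    (hEH : ∀ u v : V, E (some u) (some v) ↔ H.Adj u v ∧ u < v)
    (hEnone : ∀ a : Option V, ¬E a none) :
    betaG E = max (alphaH H) 1 ∧
    alphaH H ≤ betaG E ∧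
    ∀ v : V, betaAt E (some v) ≤ alphaH H := by
  classical
  -- part 3
  have part3 : ∀ v : V, betaAt E (some v) ≤ alphaH H := by
    intro v
    apply Finset.sup_le
    intro A hA
    rw [Finset.mem_filter, Finset.mem_powerset] at hA
    obtain ⟨hsub, hind⟩ := hA
    apply aux_card_le_alpha H E hEH A _ hind
    intro hn
    have := hsub hn
    rw [Finset.mem_insert] at this
    rcases this with h | h
    · exact Option.some_ne_none v h.symm
    · rw [Finset.mem_filter] at h
      exact hEnone _ h.2
  -- betaAt none ≤ max α 1
  have hnone_le : betaAt E none ≤ max (alphaH H) 1 := by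
    apply Finset.sup_le
    intro A hA
    rw [Finset.mem_filter, Finset.mem_powerset] at hA
    obtain ⟨hsub, hind⟩ := hA
    by_cases hn : none ∈ A
    · -- A = {none}
      have : A ⊆ {none} := by
        intro a ha
        rw [Finset.mem_singleton]
        by_contra hne
        cases a with
        | none => exact hne rfl
        | some w =>
          exact (hind none hn (some w) ha (by simp)).1 (hEsrc w)
      calc A.card ≤ 1 := by simpa using Finset.card_le_card this
        _ ≤ _ := le_max_right _ _
    · exact le_trans (aux_card_le_alpha H E hEH A hn hind) (le_max_left _ _)
  -- α ≤ betaAt none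
  have halpha_le : alphaH H ≤ betaAt E none := by
    apply Finset.sup_le
    intro B hB
    rw [Finset.mem_filter, Finset.mem_powerset] at hB
    obtain ⟨-, hBind⟩ := hB
    have hmem : B.image some ∈ ((insert (none : Option V)
        (Finset.univ.filter fun v => E none v)).powerset.filter fun A : Finset (Option V) =>
        ∀ x ∈ A, ∀ y ∈ A, x ≠ y → ¬E x y ∧ ¬E y x) := by
      rw [Finset.mem_filter, Finset.mem_powerset]
      constructor
      · intro a ha
        rw [Finset.mem_image] at ha
        obtain ⟨b, -, rfl⟩ := ha
        exact Finset.mem_insert_of_mem (by simp [hEsrc b])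
      · intro x hx y hy hxy
        rw [Finset.mem_image] at hx hy
        obtain ⟨b, hb, rfl⟩ := hx
        obtain ⟨b', hb', rfl⟩ := hy
        have hbb : b ≠ b' := by simpa using hxy
        have hadj := hBind b hb b' hb' hbb
        constructor
        · intro h; exact hadj ((hEH b b').1 h).1
        · intro h; exact hadj (((hEH b' b).1 h).1).symm
    calc B.card = (B.image some).card :=
          (Finset.card_image_of_injective _ (Option.some_injective V)).symm
      _ ≤ _ := Finset.le_sup hmem
  have hone_le : 1 ≤ betaAt E none := by
    have hmem : ({none} : Finset (Option V)) ∈ ((insert (none : Option V)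
        (Finset.univ.filter fun v => E none v)).powerset.filter fun A : Finset (Option V) =>
        ∀ x ∈ A, ∀ y ∈ A, x ≠ y → ¬E x y ∧ ¬E y x) := by
      rw [Finset.mem_filter, Finset.mem_powerset]
      constructor
      · simp
      · intro x hx y hy hxy
        rw [Finset.mem_singleton] at hx hy
        exact absurd (hx.trans hy.symm) hxy
    calc 1 = ({none} : Finset (Option V)).card := by simp
      _ ≤ _ := Finset.le_sup hmem
  have hmax_le : max (alphaH H) 1 ≤ betaG E := by
    refine le_trans (max_le halpha_le hone_le) ?_
    exact Finset.le_sup (Finset.mem_univ (none : Option V))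
  have hbetaG_le : betaG E ≤ max (alphaH H) 1 := by
    apply Finset.sup_le
    intro u _
    cases u with
    | none => exact hnone_le
    | some v => exact le_trans (part3 v) (le_max_left _ _)
  refine ⟨le_antisymm hbetaG_le hmax_le, ?_, part3⟩
  exact le_trans (le_max_left _ _) hmax_le
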